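/- Let X, Y ⊂ ℝ^d be compact, c ∈ C(X × Y), V ∈ C(Y), and let μ be a probability measure on X. Then the infimum over measurable maps T : X → Y of the functional L(V,T) = ∫_X (c(x,T(x)) − V(T(x))) dμ(x) is attained, and a measurable map T_V attains this infimum if and only if c(x, T_V(x)) − V(T_V(x)) = V^c(x) for μ-almost every x, where V^c(x) = inf_{y ∈ Y} (c(x,y) − V(y)). -/

import Mathlib

open Set MeasureTheory Metric Filter Topology

namespace RecoveryAux

variable {d : ℕ}

/-- Abbreviation for Euclidean space. -/
abbrev Esp (d : ℕ) : Type := EuclideanSpace ℝ (Fin d)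

/-- Minimum (infimum) of `f x` over a set `S`. -/
noncomputable def minOn (f : Esp d → Esp d → ℝ) (S : Set (Esp d)) (x : Esp d) : ℝ :=
  sInf (f x '' S)

/-- Set of minimizers of `f x` over `Y`. -/
def argminSet (f : Esp d → Esp d → ℝ) (Y : Set (Esp d)) (x : Esp d) : Set (Esp d) :=
  {y | y ∈ Y ∧ f x y = minOn f Y x}

/-- Nested compact sets used in the bisection construction of a measurable selection. -/
noncomputable def hist (f : Esp d → Esp d → ℝ) (Y : Set (Esp d)) (ys : ℕ → Esp d) :
    ℕ → Esp d → Set (Esp d)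
  | 0 => fun _ => Y
  | (k+1) => fun x =>
      hist f Y ys k x ∩ closedBall (ys (sInf {i | (argminSet f Y x ∩ hist f Y ys k x ∩
        closedBall (ys i) ((2:ℝ)⁻¹ ^ k)).Nonempty})) ((2:ℝ)⁻¹ ^ k)

/-- Index chosen at step `k`. -/
noncomputable def pick (f : Esp d → Esp d → ℝ) (Y : Set (Esp d)) (ys : ℕ → Esp d)
    (k : ℕ) (x : Esp d) : ℕ :=
  sInf {i | (argminSet f Y x ∩ hist f Y ys k x ∩
        closedBall (ys i) ((2:ℝ)⁻¹ ^ k)).Nonempty}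

lemma hist_succ (f : Esp d → Esp d → ℝ) (Y : Set (Esp d)) (ys : ℕ → Esp d) (k : ℕ) (x : Esp d) :
    hist f Y ys (k+1) x
      = hist f Y ys k x ∩ closedBall (ys (pick f Y ys k x)) ((2:ℝ)⁻¹ ^ k) := rfl

section Selection

variable {f : Esp d → Esp d → ℝ} {Y : Set (Esp d)} {ys : ℕ → Esp d}
variable (hf : Continuous fun p : Esp d × Esp d => f p.1 p.2)
variable (hY : IsCompact Y) (hYne : Y.Nonempty)
variable (hdense : Y ⊆ closure (Set.range ys))

include hf in
lemma hfx (x : Esp d) : Continuous (f x) :=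
  hf.comp (continuous_const.prodMk continuous_id)

include hf in
lemma minOn_mem {S : Set (Esp d)} (hS : IsCompact S) (hSne : S.Nonempty) (x : Esp d) :
    ∃ y ∈ S, f x y = minOn f S x := by
  obtain ⟨y, hy, hyv⟩ := (hS.image (hfx hf x)).sInf_mem (hSne.image _)
  exact ⟨y, hy, hyv⟩

include hf in
lemma minOn_le {S : Set (Esp d)} (hS : IsCompact S) {y : Esp d} (hy : y ∈ S) (x : Esp d) :
    minOn f S x ≤ f x y :=
  csInf_le (hS.image (hfx hf x)).bddBelow (Set.mem_image_of_mem _ hy)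

include hf hY hYne in
lemma argmin_nonempty (x : Esp d) : (argminSet f Y x).Nonempty := by
  obtain ⟨y, hy, hyv⟩ := minOn_mem hf hY hYne x
  exact ⟨y, hy, hyv⟩

lemma argmin_sub (x : Esp d) : argminSet f Y x ⊆ Y := fun y hy => hy.1

include hf hY in
lemma argmin_closed (x : Esp d) : IsClosed (argminSet f Y x) := by
  have h : argminSet f Y x = Y ∩ {y | f x y = minOn f Y x} := rfl
  rw [h]
  exact hY.isClosed.inter (isClosed_eq (hfx hf x) continuous_const)

include hf hY in
lemma argmin_inter_nonempty_iff {S : Set (Esp d)} (hS : IsCompact S) (hSsub : S ⊆ Y)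
    (hSne : S.Nonempty) (x : Esp d) :
    (argminSet f Y x ∩ S).Nonempty ↔ minOn f S x ≤ minOn f Y x := by
  constructor
  · rintro ⟨y, ⟨hyY, hyv⟩, hyS⟩
    calc minOn f S x ≤ f x y := minOn_le hf hS hyS x
    _ = minOn f Y x := hyv
  · intro h
    obtain ⟨y, hyS, hyv⟩ := minOn_mem hf hS hSne x
    have h1 : minOn f Y x ≤ f x y := minOn_le hf hY (hSsub hyS) x
    exact ⟨y, ⟨hSsub hyS, le_antisymm (hyv ▸ h) h1⟩, hyS⟩

include hf in
lemma cont_minOn {S : Set (Esp d)} (hS : IsCompact S) : Continuous (minOn f S) :=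
  IsCompact.continuous_sInf hS hf

include hf hY in
lemma cond_meas {S : Set (Esp d)} (hS : IsCompact S) (hSsub : S ⊆ Y) :
    MeasurableSet {x | (argminSet f Y x ∩ S).Nonempty} := by
  rcases S.eq_empty_or_nonempty with hS0 | hSne
  · subst hS0; simp
  · have h : {x | (argminSet f Y x ∩ S).Nonempty} = {x | minOn f S x ≤ minOn f Y x} := by
      ext x; exact argmin_inter_nonempty_iff hf hY hS hSsub hSne x
    rw [h]
    exact (isClosed_le (cont_minOn hf hS) (cont_minOn hf hY)).measurableSet

include hY in
lemma hist_compact : ∀ k x, IsCompact (hist f Y ys k x) ∧ hist f Y ys k x ⊆ Y := by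
  intro k
  induction k with
  | zero => exact fun x => ⟨hY, subset_rfl⟩
  | succ k ih =>
    intro x
    rw [hist_succ]
    exact ⟨((ih x).1).inter_right Metric.isClosed_closedBall,
      (Set.inter_subset_left).trans (ih x).2⟩

lemma hist_antitone_succ (k : ℕ) (x : Esp d) :
    hist f Y ys (k+1) x ⊆ hist f Y ys k x := by
  rw [hist_succ]; exact Set.inter_subset_left

lemma hist_antitone {k l : ℕ} (hkl : k ≤ l) (x : Esp d) :
    hist f Y ys l x ⊆ hist f Y ys k x := by
  induction l with
  | zero => simp_all
  | succ l ih =>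
    rcases Nat.lt_or_ge k (l+1) with h | h
    · exact (hist_antitone_succ l x).trans (ih (Nat.lt_succ_iff.mp h))
    · have : k = l + 1 := le_antisymm hkl h
      subst this; exact subset_rfl

include hf hY hYne hdense in
lemma inv : ∀ k x, (argminSet f Y x ∩ hist f Y ys k x).Nonempty := by
  intro k
  induction k with
  | zero =>
    intro x
    obtain ⟨y, hy⟩ := argmin_nonempty hf hY hYne x
    exact ⟨y, hy, hy.1⟩
  | succ k ih =>
    intro x
    obtain ⟨z, hz⟩ := ih x
    have hzY : z ∈ Y := hz.1.1
    have hr : (0:ℝ) < (2:ℝ)⁻¹ ^ k := by positivity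
    obtain ⟨w, ⟨i, rfl⟩, hwz⟩ := Metric.mem_closure_iff.mp (hdense hzY) _ hr
    have hne : {i | (argminSet f Y x ∩ hist f Y ys k x ∩
        closedBall (ys i) ((2:ℝ)⁻¹ ^ k)).Nonempty}.Nonempty := by
      refine ⟨i, z, ⟨hz.1, hz.2⟩, ?_⟩
      rw [Metric.mem_closedBall]
      exact le_of_lt hwz
    have hmem := Nat.sInf_mem hne
    obtain ⟨w', hw'⟩ := hmem
    exact ⟨w', hw'.1.1, by rw [hist_succ]; exact ⟨hw'.1.2, hw'.2⟩⟩

include hf hY hYne hdense in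
lemma idxset_nonempty (k : ℕ) (x : Esp d) :
    {i | (argminSet f Y x ∩ hist f Y ys k x ∩
        closedBall (ys i) ((2:ℝ)⁻¹ ^ k)).Nonempty}.Nonempty := by
  obtain ⟨z, hz⟩ := inv hf hY hYne hdense k x
  have hzY : z ∈ Y := hz.1.1
  have hr : (0:ℝ) < (2:ℝ)⁻¹ ^ k := by positivity
  obtain ⟨w, ⟨i, rfl⟩, hwz⟩ := Metric.mem_closure_iff.mp (hdense hzY) _ hr
  exact ⟨i, z, ⟨hz.1, hz.2⟩, by rw [Metric.mem_closedBall]; exact le_of_lt hwz⟩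

include hY in
lemma histSpec : ∀ (k : ℕ) (v : ℕ → ℕ), ∃ S : Set (Esp d), IsCompact S ∧ S ⊆ Y ∧
    ∀ x, (∀ j, j < k → pick f Y ys j x = v j) → hist f Y ys k x = S := by
  intro k
  induction k with
  | zero => exact fun v => ⟨Y, hY, subset_rfl, fun _ _ => rfl⟩
  | succ k ih =>
    intro v
    obtain ⟨S, hSc, hSsub, hS⟩ := ih v
    refine ⟨S ∩ closedBall (ys (v k)) ((2:ℝ)⁻¹ ^ k),
      hSc.inter_right Metric.isClosed_closedBall, Set.inter_subset_left.trans hSsub, ?_⟩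
    intro x hx
    rw [hist_succ, hS x (fun j hj => hx j (hj.trans (Nat.lt_succ_self k))),
      hx k (Nat.lt_succ_self k)]

include hf hY hYne hdense in
lemma Qmeas : ∀ (k : ℕ) (v : ℕ → ℕ),
    MeasurableSet {x : Esp d | ∀ j, j < k → pick f Y ys j x = v j} := by
  intro k
  induction k with
  | zero => simp
  | succ k ih =>
    intro v
    obtain ⟨S, hSc, hSsub, hS⟩ := histSpec hY k v
    set A := {x : Esp d | ∀ j, j < k → pick f Y ys j x = v j} with hA
    have hAm : MeasurableSet A := ih v
    set C : ℕ → Set (Esp d) :=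
      fun i => {x | (argminSet f Y x ∩ (S ∩ closedBall (ys i) ((2:ℝ)⁻¹ ^ k))).Nonempty} with hC
    have hCm : ∀ i, MeasurableSet (C i) := fun i =>
      cond_meas hf hY (hSc.inter_right Metric.isClosed_closedBall) (Set.inter_subset_left.trans hSsub)
    -- On A, `i ∈ idxset k x ↔ x ∈ C i`
    have key : ∀ x ∈ A, ∀ i, ((argminSet f Y x ∩ hist f Y ys k x ∩
        closedBall (ys i) ((2:ℝ)⁻¹ ^ k)).Nonempty ↔ x ∈ C i) := by
      intro x hx i
      rw [hS x hx, Set.inter_assoc]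
      exact Iff.rfl
    have target : {x : Esp d | ∀ j, j < k + 1 → pick f Y ys j x = v j}
        = A ∩ (C (v k) ∩ ⋂ (j : ℕ), ⋂ (_ : j < v k), (C j)ᶜ) := by
      ext x
      simp only [Set.mem_inter_iff, Set.mem_setOf_eq, Set.mem_iInter, Set.mem_compl_iff, hA]
      constructor
      · intro h
        have hxA : ∀ j, j < k → pick f Y ys j x = v j :=
          fun j hj => h j (hj.trans (Nat.lt_succ_self k))
        have hpk : pick f Y ys k x = v k := h k (Nat.lt_succ_self k)
        refine ⟨hxA, ?_, ?_⟩
        · rw [← key x hxA (v k), ← hpk]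
          exact Nat.sInf_mem (idxset_nonempty hf hY hYne hdense k x)
        · intro j hj
          rw [← key x hxA j]
          rw [← hpk] at hj
          exact Nat.notMem_of_lt_sInf hj
      · rintro ⟨hxA, hmem, hlt⟩
        intro j hj
        rcases Nat.lt_or_ge j k with h' | h'
        · exact hxA j h'
        · have : j = k := le_antisymm (Nat.lt_succ_iff.mp hj) h'
          subst this
          have hmem' : v j ∈ {i | (argminSet f Y x ∩ hist f Y ys j x ∩
              closedBall (ys i) ((2:ℝ)⁻¹ ^ j)).Nonempty} := (key x hxA (v j)).mpr hmem
          refine le_antisymm (Nat.sInf_le hmem') ?_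
          by_contra hcon
          push_neg at hcon
          have h2 := Nat.sInf_mem (idxset_nonempty hf hY hYne hdense j x)
          exact hlt _ hcon ((key x hxA _).mp h2)
    rw [target]
    exact hAm.inter ((hCm (v k)).inter
      (MeasurableSet.iInter fun j => MeasurableSet.iInter fun _ => (hCm j).compl))

include hf hY hYne hdense in
lemma pick_meas (k : ℕ) : Measurable (pick f Y ys k) := by
  apply measurable_to_countable'
  intro i
  have : pick f Y ys k ⁻¹' {i} = ⋃ (w : Fin k → ℕ),
      {x : Esp d | ∀ j, j < k + 1 →
        pick f Y ys j x = (fun j => if h : j < k then w ⟨j, h⟩ else i) j} := by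
    ext x
    simp only [Set.mem_preimage, Set.mem_singleton_iff, Set.mem_iUnion, Set.mem_setOf_eq]
    constructor
    · intro h
      refine ⟨fun j => pick f Y ys j x, fun j hj => ?_⟩
      rcases Nat.lt_or_ge j k with h' | h'
      · simp [h']
      · have : j = k := le_antisymm (Nat.lt_succ_iff.mp hj) h'
        subst this
        simp [h, lt_irrefl]
    · rintro ⟨w, hw⟩
      have := hw k (Nat.lt_succ_self k)
      simpa using this
  rw [this]
  exact MeasurableSet.iUnion fun w => Qmeas hf hY hYne hdense (k+1) _

include hf hY hYne hdense in
lemma dist_picks {k l : ℕ} (hkl : k ≤ l) (x : Esp d) :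
    dist (ys (pick f Y ys k x)) (ys (pick f Y ys l x)) ≤ 2 * (2:ℝ)⁻¹ ^ k := by
  obtain ⟨w, hw⟩ := inv hf hY hYne hdense (l+1) x
  have hwk : w ∈ hist f Y ys (k+1) x :=
    hist_antitone (Nat.succ_le_succ hkl) x hw.2
  rw [hist_succ] at hwk
  have h1 : dist w (ys (pick f Y ys k x)) ≤ (2:ℝ)⁻¹ ^ k := Metric.mem_closedBall.mp hwk.2
  have hwl := hw.2
  rw [hist_succ] at hwl
  have h2 : dist w (ys (pick f Y ys l x)) ≤ (2:ℝ)⁻¹ ^ l := Metric.mem_closedBall.mp hwl.2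
  have h3 : ((2:ℝ)⁻¹) ^ l ≤ (2:ℝ)⁻¹ ^ k :=
    pow_le_pow_of_le_one (by norm_num) (by norm_num) hkl
  calc dist (ys (pick f Y ys k x)) (ys (pick f Y ys l x))
      ≤ dist (ys (pick f Y ys k x)) w + dist w (ys (pick f Y ys l x)) := dist_triangle _ _ _
    _ ≤ (2:ℝ)⁻¹ ^ k + (2:ℝ)⁻¹ ^ k := by
        rw [dist_comm (ys (pick f Y ys k x)) w]; exact add_le_add h1 (h2.trans h3)
    _ = 2 * (2:ℝ)⁻¹ ^ k := by ring

include hf hY hYne hdense in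
theorem exists_measurable_argmin' :
    ∃ T : Esp d → Esp d, Measurable T ∧ (∀ x, T x ∈ Y) ∧
      ∀ x, f x (T x) = minOn f Y x := by
  set z : ℕ → Esp d → Esp d := fun k x => ys (pick f Y ys k x) with hz
  have hcauchy : ∀ x, CauchySeq (fun k => z k x) := by
    intro x
    rw [Metric.cauchySeq_iff']
    intro ε hε
    obtain ⟨N, hN⟩ := exists_pow_lt_of_lt_one (half_pos hε) (by norm_num : (2:ℝ)⁻¹ < 1)
    refine ⟨N, fun n hn => ?_⟩
    calc dist (z n x) (z N x) = dist (z N x) (z n x) := dist_comm _ _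
      _ ≤ 2 * (2:ℝ)⁻¹ ^ N := dist_picks hf hY hYne hdense hn x
      _ < 2 * (ε / 2) := by linarith
      _ = ε := by ring
  have hlim : ∀ x, ∃ a, Tendsto (fun k => z k x) atTop (𝓝 a) :=
    fun x => cauchySeq_tendsto_of_complete (hcauchy x)
  choose T hT using hlim
  have hwit : ∀ x, ∀ k, ∃ w, w ∈ argminSet f Y x ∩ hist f Y ys (k+1) x :=
    fun x k => inv hf hY hYne hdense (k+1) x
  choose w hwmem using hwit
  have hwdist : ∀ x k, dist (w x k) (z k x) ≤ (2:ℝ)⁻¹ ^ k := by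
    intro x k
    have := (hwmem x k).2
    rw [hist_succ] at this
    exact Metric.mem_closedBall.mp this.2
  have hwlim : ∀ x, Tendsto (fun k => w x k) atTop (𝓝 (T x)) := by
    intro x
    apply tendsto_of_tendsto_of_dist (hT x)
    refine squeeze_zero (g := fun k => ((2:ℝ)⁻¹) ^ k) (fun k => dist_nonneg) (fun k => ?_) ?_
    · rw [dist_comm]; exact hwdist x k
    · exact tendsto_pow_atTop_nhds_zero_of_lt_one (by norm_num) (by norm_num)
  have hTmem : ∀ x, T x ∈ argminSet f Y x := by
    intro x
    exact (argmin_closed hf hY x).mem_of_tendsto (hwlim x)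
      (Eventually.of_forall fun k => (hwmem x k).1)
  refine ⟨T, ?_, fun x => (hTmem x).1, fun x => (hTmem x).2⟩
  refine measurable_of_tendsto_metrizable (f := fun k => z k)
    (fun k => measurable_from_top.comp (pick_meas hf hY hYne hdense k)) ?_
  rw [tendsto_pi_nhds]
  exact hT

omit hf hY hYne hdense in
theorem exists_measurable_argmin (Y : Set (Esp d)) (hY : IsCompact Y) (hYne : Y.Nonempty)
    (f : Esp d → Esp d → ℝ) (hf : Continuous fun p : Esp d × Esp d => f p.1 p.2) :
    ∃ T : Esp d → Esp d, Measurable T ∧ (∀ x, T x ∈ Y) ∧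
      ∀ x, f x (T x) = minOn f Y x := by
  have : Nonempty (Esp d) := ⟨0⟩
  have hdense : Y ⊆ closure (Set.range (TopologicalSpace.denseSeq (Esp d))) := by
    rw [(TopologicalSpace.denseRange_denseSeq (Esp d)).closure_range]
    exact Set.subset_univ Y
  exact exists_measurable_argmin' hf hY hYne hdense

end Selection

end RecoveryAux

open RecoveryAux in
/-- The infimum over measurable maps `T : X → Y` of
`L(V,T) = ∫ (c(x,T(x)) − V(T(x))) dμ` is attained, and `T_V` attains it iff
`c(x,T_V(x)) − V(T_V(x)) = V^c(x)` for `μ`-a.e. `x`. -/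
theorem recovery_characterization {d : ℕ} (X Y : Set (EuclideanSpace ℝ (Fin d)))
    (hX : IsCompact X) (hXne : X.Nonempty) (hY : IsCompact Y) (hYne : Y.Nonempty)
    (c : EuclideanSpace ℝ (Fin d) → EuclideanSpace ℝ (Fin d) → ℝ)
    (hc : ContinuousOn (fun p : EuclideanSpace ℝ (Fin d) × EuclideanSpace ℝ (Fin d) =>
      c p.1 p.2) (X ×ˢ Y))
    (V : EuclideanSpace ℝ (Fin d) → ℝ) (hV : ContinuousOn V Y)
    (μ : Measure (EuclideanSpace ℝ (Fin d))) [IsProbabilityMeasure μ] (hμ : μ Xᶜ = 0) :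
    (∃ T₀ : EuclideanSpace ℝ (Fin d) → EuclideanSpace ℝ (Fin d),
      Measurable T₀ ∧ MapsTo T₀ X Y ∧
      ∀ T : EuclideanSpace ℝ (Fin d) → EuclideanSpace ℝ (Fin d),
        Measurable T → MapsTo T X Y →
        ∫ x, (c x (T₀ x) - V (T₀ x)) ∂μ ≤ ∫ x, (c x (T x) - V (T x)) ∂μ) ∧
    (∀ TV : EuclideanSpace ℝ (Fin d) → EuclideanSpace ℝ (Fin d),
      Measurable TV → MapsTo TV X Y →
      ((∀ T : EuclideanSpace ℝ (Fin d) → EuclideanSpace ℝ (Fin d),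
          Measurable T → MapsTo T X Y →
          ∫ x, (c x (TV x) - V (TV x)) ∂μ ≤ ∫ x, (c x (T x) - V (T x)) ∂μ) ↔
        (∀ᵐ x ∂μ, c x (TV x) - V (TV x) = ⨅ y : Y, (c x y - V y)))) := by
  classical
  have hXYc : IsCompact (X ×ˢ Y) := hX.prod hY
  have hXYcl : IsClosed (X ×ˢ Y) := hXYc.isClosed
  obtain ⟨F, hF⟩ := ContinuousMap.exists_restrict_eq (Y := ℝ) hXYcl
    ⟨_, continuousOn_iff_continuous_restrict.mp hc⟩
  have hFeq : ∀ p ∈ X ×ˢ Y, F p = c p.1 p.2 := by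
    intro p hp
    have h := congrFun (congrArg DFunLike.coe hF) ⟨p, hp⟩
    simpa using h
  obtain ⟨W, hW⟩ := ContinuousMap.exists_restrict_eq (Y := ℝ) hY.isClosed
    ⟨_, continuousOn_iff_continuous_restrict.mp hV⟩
  have hWeq : ∀ y ∈ Y, W y = V y := by
    intro y hy
    have h := congrFun (congrArg DFunLike.coe hW) ⟨y, hy⟩
    simpa using h
  set g : Esp d → Esp d → ℝ := fun x y => F (x, y) - W y with hg
  have hgcont : Continuous fun p : Esp d × Esp d => g p.1 p.2 := by
    apply Continuous.sub
    · exact F.continuous.comp (continuous_fst.prodMk continuous_snd)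
    · exact W.continuous.comp continuous_snd
  obtain ⟨T₀, hT₀m, hT₀mem, hT₀val⟩ := exists_measurable_argmin Y hY hYne g hgcont
  set m : Esp d → ℝ := minOn g Y with hm
  have hmc : Continuous m := cont_minOn hgcont hY
  obtain ⟨B, hB⟩ := hXYc.exists_bound_of_continuousOn
    ((hgcont).continuousOn (s := X ×ˢ Y))
  have haeX : ∀ᵐ x ∂μ, x ∈ X := by
    rw [ae_iff]
    simpa [Set.compl_def] using hμ
  -- facts about g on X × Y
  have hgc : ∀ x ∈ X, ∀ y ∈ Y, g x y = c x y - V y := by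
    intro x hx y hy
    have h1 := hFeq (x, y) (Set.mk_mem_prod hx hy)
    rw [hg]
    simp only []
    rw [h1, hWeq y hy]
  have hpt : ∀ (T : Esp d → Esp d), MapsTo T X Y → ∀ x ∈ X,
      c x (T x) - V (T x) = g x (T x) := fun T hT x hx => (hgc x hx _ (hT hx)).symm
  have hbd : ∀ x ∈ X, ∀ y ∈ Y, ‖g x y‖ ≤ B := by
    intro x hx y hy
    exact hB (x, y) (Set.mk_mem_prod hx hy)
  -- integrability and integral identification for admissible maps
  have hmeasg : ∀ (T : Esp d → Esp d), Measurable T → Measurable fun x => g x (T x) := by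
    intro T hTm
    exact hgcont.measurable.comp (measurable_id.prodMk hTm)
  have hIntg : ∀ (T : Esp d → Esp d), Measurable T → MapsTo T X Y →
      Integrable (fun x => g x (T x)) μ := by
    intro T hTm hTmap
    refine Integrable.mono' (integrable_const B) (hmeasg T hTm).aestronglyMeasurable ?_
    filter_upwards [haeX] with x hx
    exact hbd x hx _ (hTmap hx)
  have hIeq : ∀ (T : Esp d → Esp d), MapsTo T X Y →
      ∫ x, (c x (T x) - V (T x)) ∂μ = ∫ x, g x (T x) ∂μ := by
    intro T hTmap
    apply integral_congr_ae
    filter_upwards [haeX] with x hx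
    exact hpt T hTmap x hx
  -- m agrees with the subtype infimum on X
  have hmiInf : ∀ x ∈ X, m x = ⨅ y : Y, (c x y - V y) := by
    intro x hx
    have himg : g x '' Y = (fun y => c x y - V y) '' Y :=
      Set.image_congr fun y hy => hgc x hx y hy
    rw [hm, RecoveryAux.minOn, himg, Set.image_eq_range]
    rfl
  have hmg : ∀ x, g x (T₀ x) = m x := hT₀val
  have hIntm : Integrable m μ := by
    refine Integrable.mono' (integrable_const B) hmc.measurable.aestronglyMeasurable ?_
    filter_upwards [haeX] with x hx
    rw [← hmg x]
    exact hbd x hx _ (hT₀mem x)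
  have hIm : ∫ x, g x (T₀ x) ∂μ = ∫ x, m x ∂μ :=
    integral_congr_ae (Eventually.of_forall hmg)
  have hlow : ∀ (T : Esp d → Esp d), MapsTo T X Y → ∀ x ∈ X, m x ≤ g x (T x) :=
    fun T hTmap x hx => minOn_le hgcont hY (hTmap hx) x
  have hmono : ∀ (T : Esp d → Esp d), Measurable T → MapsTo T X Y →
      ∫ x, m x ∂μ ≤ ∫ x, g x (T x) ∂μ := by
    intro T hTm hTmap
    apply integral_mono_ae hIntm (hIntg T hTm hTmap)
    filter_upwards [haeX] with x hx
    exact hlow T hTmap x hx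
  have hT₀opt : ∀ (T : Esp d → Esp d), Measurable T → MapsTo T X Y →
      ∫ x, (c x (T₀ x) - V (T₀ x)) ∂μ ≤ ∫ x, (c x (T x) - V (T x)) ∂μ := by
    intro T hTm hTmap
    rw [hIeq T₀ (fun x _ => hT₀mem x), hIeq T hTmap, hIm]
    exact hmono T hTm hTmap
  refine ⟨⟨T₀, hT₀m, fun x _ => hT₀mem x, hT₀opt⟩, ?_⟩
  intro TV hTVm hTVmap
  constructor
  · intro hopt
    have e1 : ∫ x, g x (TV x) ∂μ ≤ ∫ x, m x ∂μ := by
      have := hopt T₀ hT₀m (fun x _ => hT₀mem x)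
      rwa [hIeq TV hTVmap, hIeq T₀ (fun x _ => hT₀mem x), hIm] at this
    have e2 := hmono TV hTVm hTVmap
    have hzero : ∫ x, (g x (TV x) - m x) ∂μ = 0 := by
      rw [integral_sub (hIntg TV hTVm hTVmap) hIntm]
      linarith
    have hnn : 0 ≤ᵐ[μ] fun x => g x (TV x) - m x := by
      filter_upwards [haeX] with x hx
      simp only [Pi.zero_apply]
      have := hlow TV hTVmap x hx
      linarith
    have hae0 := (integral_eq_zero_iff_of_nonneg_ae hnn
      ((hIntg TV hTVm hTVmap).sub hIntm)).mp hzero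
    filter_upwards [haeX, hae0] with x hx hx0
    have hgm : g x (TV x) = m x := by
      have h0 : g x (TV x) - m x = 0 := by simpa using hx0
      linarith
    rw [hpt TV hTVmap x hx, hgm, hmiInf x hx]
  · intro hae
    intro T hTm hTmap
    have : ∫ x, (c x (TV x) - V (TV x)) ∂μ = ∫ x, m x ∂μ := by
      apply integral_congr_ae
      filter_upwards [haeX, hae] with x hx hxe
      rw [hxe, ← hmiInf x hx]
    rw [this, hIeq T hTmap]
    exact hmono T hTm hTmap
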